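/- arXiv:1912.08993 — 2 statements merged into one kernel-verified Lean document; each statement's English description precedes it below -/
import Mathlib

section
/- Identifiability implies full-rank union: if ξ and ξ⋆ are such that X_ξ has full column rank, (I − P_γ)X_{ξ⋆} ≠ 0 for every γ ⊆ {1,…,p} of size |γ| ≤ t that does not contain ξ⋆, and |ξ ∪ ξ⋆| ≤ t, then X_{ξ∪ξ⋆} has full column rank provided X_{ξ⋆} has full column rank. Consequently MUEV(t) ≥ MNEV(t), where MNEV(t) is the minimum over |ξ| ≤ t of the minimum non-zero eigenvalue of X_ξᵀX_ξ/n. -/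
open Matrix Finset

/-- Columns of `X` indexed by a subset `ξ`. -/
noncomputable def cols {n p : ℕ} (X : Matrix (Fin n) (Fin p) ℝ) (ξ : Finset (Fin p)) :
    Matrix (Fin n) {j // j ∈ ξ} ℝ := fun i j => X i j.val

/-- Gram matrix of the columns indexed by `ξ`. -/
noncomputable def gram {n p : ℕ} (X : Matrix (Fin n) (Fin p) ℝ) (ξ : Finset (Fin p)) :
    Matrix {j // j ∈ ξ} {j // j ∈ ξ} ℝ := (cols X ξ)ᵀ * cols X ξ

/-- Column span of the columns of `X` indexed by `γ`. -/
noncomputable def colSpan {n p : ℕ} (X : Matrix (Fin n) (Fin p) ℝ) (γ : Finset (Fin p)) :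
    Submodule ℝ (Fin n → ℝ) :=
  Submodule.span ℝ {c | ∃ j ∈ γ, c = fun i => X i j}

/-- `P` is the orthogonal projection matrix onto the column space of `X_γ`. -/
def IsProjOnto {n p : ℕ} (X : Matrix (Fin n) (Fin p) ℝ) (γ : Finset (Fin p))
    (P : Matrix (Fin n) (Fin n) ℝ) : Prop :=
  P.IsSymm ∧ (∀ v, P.mulVec v ∈ colSpan X γ) ∧ (∀ v ∈ colSpan X γ, P.mulVec v = v)

/-- Smallest eigenvalue of a (symmetric) matrix. -/
noncomputable def lamMin {ι : Type*} [Fintype ι] (A : Matrix ι ι ℝ) : ℝ :=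
  sInf {r : ℝ | ∃ v : ι → ℝ, v ≠ 0 ∧ A.mulVec v = r • v}

/-- Smallest non-zero eigenvalue of a (symmetric) matrix. -/
noncomputable def lamMinNZ {ι : Type*} [Fintype ι] (A : Matrix ι ι ℝ) : ℝ :=
  sInf {r : ℝ | r ≠ 0 ∧ ∃ v : ι → ℝ, v ≠ 0 ∧ A.mulVec v = r • v}

/-- Full column rank iff `mulVec` has trivial kernel. -/
lemma aux_rank_eq_card_iff {n : ℕ} {m : Type*} [Fintype m] [DecidableEq m]
    (A : Matrix (Fin n) m ℝ) :
    A.rank = Fintype.card m ↔ ∀ v : m → ℝ, A.mulVec v = 0 → v = 0 := by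
  have h := LinearMap.finrank_range_add_finrank_ker A.mulVecLin
  rw [Module.finrank_pi] at h
  have hr : A.rank = Module.finrank ℝ (LinearMap.range A.mulVecLin) := rfl
  have hker : (∀ v : m → ℝ, A.mulVec v = 0 → v = 0) ↔ LinearMap.ker A.mulVecLin = ⊥ := by
    rw [LinearMap.ker_eq_bot']
    simp [Matrix.mulVecLin_apply]
  constructor
  · intro hrank
    rw [hker]
    have h0 : Module.finrank ℝ (LinearMap.ker A.mulVecLin) = 0 := by omega
    exact Submodule.finrank_eq_zero.mp h0
  · intro hv
    rw [hker] at hv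
    rw [hv, finrank_bot] at h
    omega

/-- `mulVec` of a column submatrix as a sum over the finset. -/
lemma aux_mulVec_cols {n p : ℕ} (X : Matrix (Fin n) (Fin p) ℝ) (γ : Finset (Fin p))
    (U : Fin p → ℝ) (i : Fin n) :
    (cols X γ).mulVec (fun j => U j.val) i = ∑ j ∈ γ, X i j * U j := by
  classical
  show ∑ j : {j // j ∈ γ}, X i j.val * U j.val = ∑ j ∈ γ, X i j * U j
  exact Finset.sum_coe_sort γ (fun j => X i j * U j)

/-- Existence of an orthogonal projection matrix onto any column span. -/
lemma aux_exists_proj {n p : ℕ} (X : Matrix (Fin n) (Fin p) ℝ) (γ : Finset (Fin p)) :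
    ∃ P : Matrix (Fin n) (Fin n) ℝ, IsProjOnto X γ P := by
  classical
  set L : (Fin n → ℝ) ≃ₗ[ℝ] EuclideanSpace ℝ (Fin n) :=
    (WithLp.linearEquiv 2 ℝ (Fin n → ℝ)).symm with hL
  set W : Submodule ℝ (EuclideanSpace ℝ (Fin n)) := (colSpan X γ).map L.toLinearMap with hW
  let f : (Fin n → ℝ) →ₗ[ℝ] (Fin n → ℝ) :=
    L.symm.toLinearMap ∘ₗ (W.subtype ∘ₗ (W.orthogonalProjectionOnto).toLinearMap) ∘ₗ L.toLinearMap
  have hf : ∀ v : Fin n → ℝ, f v = L.symm ((W.orthogonalProjectionOnto (L v) : EuclideanSpace ℝ (Fin n))) :=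
    fun v => rfl
  have hmv : ∀ v, (LinearMap.toMatrix' f).mulVec v = f v := by
    intro v
    rw [← Matrix.toLin'_apply, Matrix.toLin'_toMatrix']
  have hdot : ∀ x y : Fin n → ℝ,
      x ⬝ᵥ y = (inner ℝ (L x) (L y) : ℝ) := by
    intro x y
    simp [PiLp.inner_apply, dotProduct, hL, mul_comm]
  have hsa : ∀ x y : Fin n → ℝ, (f x) ⬝ᵥ y = x ⬝ᵥ (f y) := by
    intro x y
    rw [hdot, hdot]
    have h1 : L (f x) = (W.orthogonalProjectionOnto (L x) : EuclideanSpace ℝ (Fin n)) := by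
      rw [hf]; exact L.apply_symm_apply _
    have h2 : L (f y) = (W.orthogonalProjectionOnto (L y) : EuclideanSpace ℝ (Fin n)) := by
      rw [hf]; exact L.apply_symm_apply _
    rw [h1, h2]
    exact Submodule.inner_starProjection_left_eq_right W (L x) (L y)
  refine ⟨LinearMap.toMatrix' f, ?_, ?_, ?_⟩
  · -- symmetry
    have hentry : ∀ i j, LinearMap.toMatrix' f i j = f (Pi.single j 1) i := by
      intro i j
      have harg : (fun j' : Fin n => if j' = j then (1:ℝ) else 0) = Pi.single j 1 := by
        funext k; simp [Pi.single_apply]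
      rw [LinearMap.toMatrix'_apply]
    rw [Matrix.IsSymm]
    ext i j
    rw [Matrix.transpose_apply, hentry, hentry]
    have h1 : f (Pi.single i 1) j = (f (Pi.single i 1)) ⬝ᵥ Pi.single j 1 := by
      simp [dotProduct, Pi.single_apply]
    have h2 : f (Pi.single j 1) i = Pi.single i 1 ⬝ᵥ (f (Pi.single j 1)) := by
      simp [dotProduct, Pi.single_apply]
    rw [h1, h2, hsa]
  · -- maps into colSpan
    intro v
    rw [hmv, hf]
    have hmem : (W.orthogonalProjectionOnto (L v) : EuclideanSpace ℝ (Fin n)) ∈ W :=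
      (W.orthogonalProjectionOnto (L v)).2
    replace hmem : (W.orthogonalProjectionOnto (L v) : EuclideanSpace ℝ (Fin n)) ∈ (colSpan X γ).map L.toLinearMap := hmem
    obtain ⟨w, hw, hWw⟩ := Submodule.mem_map.mp hmem
    rw [← hWw, LinearEquiv.coe_coe, L.symm_apply_apply]
    exact hw
  · -- fixes colSpan
    intro v hv
    rw [hmv, hf]
    have hvW : L v ∈ W := Submodule.mem_map_of_mem hv
    rw [← Submodule.starProjection_apply, Submodule.starProjection_eq_self_iff.mpr hvW, L.symm_apply_apply]

/-- Main part 1: unions with the true model are full rank under identifiability. -/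
lemma aux_union_rank {n p : ℕ}
    (X : Matrix (Fin n) (Fin p) ℝ) (ξstar ξ : Finset (Fin p)) (t : ℕ)
    (hfull : (cols X ξ).rank = ξ.card)
    (hident : ∀ γ : Finset (Fin p), γ.card ≤ t → ¬ ξstar ⊆ γ →
      ∀ P : Matrix (Fin n) (Fin n) ℝ, IsProjOnto X γ P →
        ∃ j ∈ ξstar, P.mulVec (fun i => X i j) ≠ (fun i => X i j))
    (hcard : (ξ ∪ ξstar).card ≤ t) :
    (cols X (ξ ∪ ξstar)).rank = (ξ ∪ ξstar).card := by
  classical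
  rw [← Fintype.card_coe] at hfull ⊢
  rw [aux_rank_eq_card_iff] at hfull ⊢
  intro v hv
  by_contra hv0
  set V : Fin p → ℝ := fun j => if h : j ∈ ξ ∪ ξstar then v ⟨j, h⟩ else 0 with hVdef
  have hVv : v = fun j : {j // j ∈ ξ ∪ ξstar} => V j.val := by
    funext j
    simp only [hVdef]
    rw [dif_pos j.2]
  have hsum : ∀ i, ∑ j ∈ ξ ∪ ξstar, X i j * V j = 0 := by
    intro i
    rw [← aux_mulVec_cols X (ξ ∪ ξstar) V i, ← hVv, hv]
    rfl
  by_cases hA : ∀ j ∈ ξ ∪ ξstar, j ∉ ξ → V j = 0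
  · -- supported on ξ : contradiction with full rank of ξ
    have hw : (cols X ξ).mulVec (fun j : {j // j ∈ ξ} => V j.val) = 0 := by
      funext i
      rw [aux_mulVec_cols]
      rw [Finset.sum_subset (Finset.subset_union_left (s₂ := ξstar))]
      · exact hsum i
      · intro x hx hnx
        rw [hA x hx hnx, mul_zero]
    have h0 := hfull _ hw
    apply hv0
    rw [hVv]
    funext j
    show V j.val = 0
    rcases Finset.mem_union.mp j.2 with hj | hj
    · exact congrFun h0 ⟨j.val, hj⟩
    · by_cases hjξ : j.val ∈ ξ
      · exact congrFun h0 ⟨j.val, hjξ⟩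
      · exact hA j.val j.2 hjξ
  · push_neg at hA
    obtain ⟨j0, hj0U, hj0ξ, hVj0⟩ := hA
    have hj0star : j0 ∈ ξstar := by
      rcases Finset.mem_union.mp hj0U with h | h
      · exact absurd h hj0ξ
      · exact h
    set γ : Finset (Fin p) := (ξ ∪ ξstar).erase j0 with hγ
    have hγcard : γ.card ≤ t :=
      le_trans (Finset.card_le_card (Finset.erase_subset _ _)) hcard
    have hns : ¬ ξstar ⊆ γ := fun h => Finset.notMem_erase j0 _ (h hj0star)
    obtain ⟨P, hP⟩ := aux_exists_proj X γ
    obtain ⟨j1, hj1, hne⟩ := hident γ hγcard hns P hP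
    apply hne
    apply hP.2.2
    by_cases hj : j1 = j0
    · subst hj
      have key : (fun i => X i j1) = ∑ j ∈ γ, (-(V j / V j1)) • (fun i => X i j) := by
        funext i
        have h1 : ∑ j ∈ γ, X i j * V j + X i j1 * V j1 = 0 := by
          rw [Finset.sum_erase_add _ _ hj0U]
          exact hsum i
        have h2 : (∑ j ∈ γ, (-(V j / V j1)) • (fun i' => X i' j)) i
            = ∑ j ∈ γ, (-(V j / V j1)) * X i j := by
          rw [Finset.sum_apply]
          rfl
        rw [h2]
        have h3 : ∑ j ∈ γ, (-(V j / V j1)) * X i j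
            = (-(V j1)⁻¹) * ∑ j ∈ γ, X i j * V j := by
          rw [Finset.mul_sum]
          refine Finset.sum_congr rfl fun j _ => ?_
          rw [div_eq_mul_inv]
          ring
        rw [h3]
        have h4 : ∑ j ∈ γ, X i j * V j = -(X i j1 * V j1) := by linarith
        rw [h4]
        field_simp
      rw [key]
      exact Submodule.sum_mem _ fun j hjγ =>
        Submodule.smul_mem _ _ (Submodule.subset_span ⟨j, hjγ, rfl⟩)
    · exact Submodule.subset_span ⟨j1, Finset.mem_erase.mpr ⟨hj, Finset.mem_union_right _ hj1⟩, rfl⟩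

/-- Nonzero eigenvalues of the scaled Gram matrix are nonnegative. -/
lemma aux_eig_nonneg {n p : ℕ} (X : Matrix (Fin n) (Fin p) ℝ) (γ : Finset (Fin p))
    {r : ℝ} {v : {j // j ∈ γ} → ℝ} (hv0 : v ≠ 0)
    (hv : (((n : ℝ))⁻¹ • gram X γ).mulVec v = r • v) : 0 ≤ r := by
  have hd : 0 < v ⬝ᵥ v := by
    rcases lt_or_eq_of_le (Finset.sum_nonneg fun i _ => mul_self_nonneg (v i)) with h | h
    · exact h
    · exact absurd (dotProduct_self_eq_zero.mp h.symm) hv0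
  have hkey : r * (v ⬝ᵥ v) = (n : ℝ)⁻¹ * ((cols X γ).mulVec v ⬝ᵥ (cols X γ).mulVec v) := by
    have h1 : v ⬝ᵥ ((((n : ℝ))⁻¹ • gram X γ).mulVec v) = v ⬝ᵥ (r • v) := by rw [hv]
    rw [Matrix.smul_mulVec] at h1
    rw [dotProduct_smul, dotProduct_smul] at h1
    have h2 : v ⬝ᵥ (gram X γ).mulVec v = (cols X γ).mulVec v ⬝ᵥ (cols X γ).mulVec v := by
      rw [_root_.gram, ← Matrix.mulVec_mulVec, Matrix.dotProduct_mulVec, Matrix.vecMul_transpose]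
    rw [h2] at h1
    simpa [smul_eq_mul, mul_comm] using h1.symm
  have hrhs : 0 ≤ (n : ℝ)⁻¹ * ((cols X γ).mulVec v ⬝ᵥ (cols X γ).mulVec v) := by
    apply mul_nonneg
    · positivity
    · exact Finset.sum_nonneg fun i _ => mul_self_nonneg _
  nlinarith

/-- Identifiability implies that unions with the true model are full rank, and
consequently MUEV(t) ≥ MNEV(t). -/
theorem identifiability_full_rank_union_and_muev_ge_mnev {n p : ℕ}
    (X : Matrix (Fin n) (Fin p) ℝ) (ξstar ξ : Finset (Fin p)) (t : ℕ)
    (hfullstar : (cols X ξstar).rank = ξstar.card)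
    (hfull : (cols X ξ).rank = ξ.card)
    (hident : ∀ γ : Finset (Fin p), γ.card ≤ t → ¬ ξstar ⊆ γ →
      ∀ P : Matrix (Fin n) (Fin n) ℝ, IsProjOnto X γ P →
        ∃ j ∈ ξstar, P.mulVec (fun i => X i j) ≠ (fun i => X i j))
    (hcard : (ξ ∪ ξstar).card ≤ t) :
    (cols X (ξ ∪ ξstar)).rank = (ξ ∪ ξstar).card ∧
    sInf {r : ℝ | ∃ γ : Finset (Fin p), γ.card ≤ t ∧
        r = lamMinNZ (((n : ℝ))⁻¹ • gram X γ)} ≤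
      sInf {r : ℝ | ∃ γ : Finset (Fin p), (cols X γ).rank = γ.card ∧
        (γ ∪ ξstar).card ≤ t ∧ r = lamMin (((n : ℝ))⁻¹ • gram X (γ ∪ ξstar))} := by
  classical
  refine ⟨aux_union_rank X ξstar ξ t hfull hident hcard, ?_⟩
  set S1 : Set ℝ := {r : ℝ | ∃ γ : Finset (Fin p), γ.card ≤ t ∧
      r = lamMinNZ (((n : ℝ))⁻¹ • gram X γ)} with hS1
  set S2 : Set ℝ := {r : ℝ | ∃ γ : Finset (Fin p), (cols X γ).rank = γ.card ∧
      (γ ∪ ξstar).card ≤ t ∧ r = lamMin (((n : ℝ))⁻¹ • gram X (γ ∪ ξstar))} with hS2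
  have hbdd : BddBelow S1 := by
    refine ⟨0, fun r hr => ?_⟩
    obtain ⟨γ, _, hrγ⟩ := hr
    rw [hrγ, lamMinNZ]
    apply Real.sInf_nonneg
    rintro x ⟨_, v, hv0, hv⟩
    exact aux_eig_nonneg X γ hv0 hv
  have hne : S2.Nonempty := ⟨_, ξ, hfull, hcard, rfl⟩
  have hsub : S2 ⊆ S1 := by
    rintro r ⟨γ, hγfull, hγcard, hrγ⟩
    have hufull := aux_union_rank X ξstar γ t hγfull hident hγcard
    rw [← Fintype.card_coe, aux_rank_eq_card_iff] at hufull
    refine ⟨γ ∪ ξstar, hγcard, ?_⟩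
    rw [hrγ, lamMin, lamMinNZ]
    congr 1
    ext x
    simp only [Set.mem_setOf_eq]
    constructor
    · rintro ⟨v, hv0, hv⟩
      refine ⟨?_, v, hv0, hv⟩
      rintro rfl
      rw [zero_smul] at hv
      -- n positive since the union is nonempty and full rank
      obtain ⟨j, hj⟩ := Function.ne_iff.mp hv0
      have hnpos : 0 < n := by
        by_contra hn
        have hn0 : n = 0 := by omega
        have h1 : (cols X (γ ∪ ξstar)).rank ≤ Fintype.card (Fin n) :=
          Matrix.rank_le_card_height _
        rw [Fintype.card_fin] at h1
        have h2 : (cols X (γ ∪ ξstar)).rank = (γ ∪ ξstar).card :=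
          aux_union_rank X ξstar γ t hγfull hident hγcard
        have h3 : 0 < (γ ∪ ξstar).card := Finset.card_pos.mpr ⟨j.val, j.2⟩
        omega
      have hninv : ((n : ℝ))⁻¹ ≠ 0 := by positivity
      rw [Matrix.smul_mulVec] at hv
      have hg : (gram X (γ ∪ ξstar)).mulVec v = 0 := by
        rcases smul_eq_zero.mp hv with h | h
        · exact absurd h hninv
        · exact h
      have hcv : (cols X (γ ∪ ξstar)).mulVec v = 0 := by
        have h2 : v ⬝ᵥ (gram X (γ ∪ ξstar)).mulVec v
            = (cols X (γ ∪ ξstar)).mulVec v ⬝ᵥ (cols X (γ ∪ ξstar)).mulVec v := by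
          rw [_root_.gram, ← Matrix.mulVec_mulVec, Matrix.dotProduct_mulVec, Matrix.vecMul_transpose]
        rw [hg] at h2
        simp only [dotProduct_zero] at h2
        exact dotProduct_self_eq_zero.mp h2.symm
      exact hv0 (hufull v hcv)
    · rintro ⟨_, v, hv0, hv⟩
      exact ⟨v, hv0, hv⟩
  exact csInf_le_csInf hbdd hne hsub
end

section
/- Signal separation via Schur complement: for a design matrix X and full-rank models ξ ⊉ ξ⋆, if λ_min(X_{ξ∪ξ⋆}ᵀX_{ξ∪ξ⋆}) ≥ nλ > 0, then ‖(P_{ξ∪ξ⋆} − P_ξ)X_{ξ⋆}β⋆_{ξ⋆}‖² ≥ nλ‖β⋆_{ξ⋆∖ξ}‖² ≥ nλ·|ξ⋆∖ξ|·min_{j∈ξ⋆}|β⋆_j|². -/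
open Matrix Finset

open scoped RealInnerProductSpace in
lemma lamMin_quad {ι : Type*} [Fintype ι] [DecidableEq ι] [Nonempty ι]
    (A : Matrix ι ι ℝ) (hA : A.IsHermitian) (x : ι → ℝ) :
    lamMin A * (∑ i, x i ^ 2) ≤ x ⬝ᵥ A.mulVec x := by
  classical
  set B := hA.eigenvectorBasis with hB
  set μ := Finset.univ.inf' Finset.univ_nonempty hA.eigenvalues with hμ
  have hTapp : ∀ v : EuclideanSpace ℝ ι, ∀ i, (Matrix.toEuclideanLin A v) i = (A.mulVec v) i :=
    fun v i => rfl
  have hAB : ∀ i, Matrix.toEuclideanLin A (B i) = hA.eigenvalues i • (B i) := by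
    intro i
    ext j
    have := congrFun (hA.mulVec_eigenvectorBasis i) j
    simpa [hTapp] using this
  have key : ∀ y : EuclideanSpace ℝ ι, μ * ⟪y, y⟫ ≤ ⟪y, Matrix.toEuclideanLin A y⟫ := by
    intro y
    have hsym := (Matrix.isHermitian_iff_isSymmetric.1 hA)
    have hterm : ∀ i, ⟪y, B i⟫ * ⟪B i, Matrix.toEuclideanLin A y⟫
        = hA.eigenvalues i * (⟪B i, y⟫ * ⟪B i, y⟫) := by
      intro i
      have h1 : ⟪B i, Matrix.toEuclideanLin A y⟫ = ⟪Matrix.toEuclideanLin A (B i), y⟫ :=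
        (hsym (B i) y).symm
      rw [h1, hAB i, real_inner_smul_left, real_inner_comm y (B i)]
      ring
    have hP1 := B.sum_inner_mul_inner y (Matrix.toEuclideanLin A y)
    have hP2 := B.sum_inner_mul_inner y y
    rw [← hP1, ← hP2]
    have hrw : ∀ i, ⟪y, B i⟫ * ⟪B i, y⟫ = ⟪B i, y⟫ * ⟪B i, y⟫ := by
      intro i; rw [real_inner_comm y (B i)]
    calc μ * ∑ i, ⟪y, B i⟫ * ⟪B i, y⟫ = ∑ i, μ * (⟪B i, y⟫ * ⟪B i, y⟫) := by
          rw [Finset.mul_sum]; exact Finset.sum_congr rfl fun i _ => by rw [hrw]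
      _ ≤ ∑ i, hA.eigenvalues i * (⟪B i, y⟫ * ⟪B i, y⟫) := by
          refine Finset.sum_le_sum fun i _ => ?_
          exact mul_le_mul_of_nonneg_right (Finset.inf'_le _ (Finset.mem_univ i))
            (mul_self_nonneg _)
      _ = ∑ i, ⟪y, B i⟫ * ⟪B i, Matrix.toEuclideanLin A y⟫ := by
          exact Finset.sum_congr rfl fun i _ => (hterm i).symm
  have hquad : ∀ v : ι → ℝ, μ * (∑ i, v i ^ 2) ≤ v ⬝ᵥ A.mulVec v := by
    intro v
    have := key ((WithLp.equiv 2 (ι → ℝ)).symm v)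
    rw [PiLp.inner_apply, PiLp.inner_apply] at this
    simpa [PiLp.inner_apply, RCLike.inner_apply, dotProduct, sq, hTapp, mul_comm] using this
  have hbdd : ∀ r ∈ {r : ℝ | ∃ v : ι → ℝ, v ≠ 0 ∧ A.mulVec v = r • v}, μ ≤ r := by
    rintro r ⟨v, hv, hAv⟩
    have hpos : 0 < ∑ i, v i ^ 2 := by
      obtain ⟨i, hi⟩ := Function.ne_iff.1 hv
      refine Finset.sum_pos' (fun i _ => sq_nonneg _) ⟨i, Finset.mem_univ i, ?_⟩
      have : v i ≠ 0 := hi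
      positivity
    have h1 := hquad v
    rw [hAv] at h1
    have h2 : v ⬝ᵥ (r • v) = r * ∑ i, v i ^ 2 := by
      simp only [dotProduct, Pi.smul_apply, smul_eq_mul, Finset.mul_sum]
      exact Finset.sum_congr rfl fun i _ => by ring
    rw [h2] at h1
    exact le_of_mul_le_mul_right (by simpa [mul_comm] using h1) hpos
  have hmem : μ ∈ {r : ℝ | ∃ v : ι → ℝ, v ≠ 0 ∧ A.mulVec v = r • v} := by
    obtain ⟨i, _, hi⟩ := Finset.exists_mem_eq_inf' Finset.univ_nonempty hA.eigenvalues
    refine ⟨B i, ?_, ?_⟩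
    · intro h
      apply B.orthonormal.ne_zero i
      ext j
      exact congrFun h j
    · rw [hμ, hi]; exact hA.mulVec_eigenvectorBasis i
  have hle : lamMin A ≤ μ := csInf_le ⟨μ, hbdd⟩ hmem
  calc lamMin A * (∑ i, x i ^ 2) ≤ μ * (∑ i, x i ^ 2) :=
        mul_le_mul_of_nonneg_right hle (Finset.sum_nonneg fun i _ => sq_nonneg _)
    _ ≤ x ⬝ᵥ A.mulVec x := hquad x

lemma col_mem_colSpan {n p : ℕ} (X : Matrix (Fin n) (Fin p) ℝ) (γ : Finset (Fin p))
    {j : Fin p} (hj : j ∈ γ) : (fun i => X i j) ∈ colSpan X γ :=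
  Submodule.subset_span ⟨j, hj, rfl⟩

lemma colSpan_eq_range {n p : ℕ} (X : Matrix (Fin n) (Fin p) ℝ) (γ : Finset (Fin p)) :
    colSpan X γ = LinearMap.range (cols X γ).mulVecLin := by
  rw [Matrix.range_mulVecLin, colSpan]
  congr 1
  ext c
  constructor
  · rintro ⟨j, hj, rfl⟩
    exact ⟨⟨j, hj⟩, rfl⟩
  · rintro ⟨j, rfl⟩
    exact ⟨j.val, j.2, rfl⟩

theorem signal_separation_part1 {n p : ℕ} (X : Matrix (Fin n) (Fin p) ℝ)
    (ξstar ξ : Finset (Fin p)) (βstar : Fin p → ℝ) (lam : ℝ)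
    (hξstar_ne : ξstar.Nonempty)
    (hsupp : ∀ j ∉ ξstar, βstar j = 0)
    (hlam : 0 < lam)
    (heig : (n : ℝ) * lam ≤ lamMin (gram X (ξ ∪ ξstar)))
    (Pu Pξ : Matrix (Fin n) (Fin n) ℝ)
    (hPu : IsProjOnto X (ξ ∪ ξstar) Pu) (hPξ : IsProjOnto X ξ Pξ) :
    (n : ℝ) * lam * ∑ j ∈ ξstar \ ξ, (βstar j) ^ 2 ≤
        ∑ i, ((Pu - Pξ).mulVec (X.mulVec βstar) i) ^ 2 := by
  classical
  set u := ξ ∪ ξstar with hu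
  set y : Fin n → ℝ := X.mulVec βstar with hy
  -- decompose y
  set y1 : Fin n → ℝ := fun i => ∑ j ∈ ξstar ∩ ξ, X i j * βstar j with hy1
  set y2 : Fin n → ℝ := fun i => ∑ j ∈ ξstar \ ξ, X i j * βstar j with hy2
  have hysplit : y = y1 + y2 := by
    funext i
    have h1 : y i = ∑ j ∈ ξstar, X i j * βstar j := by
      rw [hy]
      simp only [Matrix.mulVec, dotProduct]
      refine (Finset.sum_subset (Finset.subset_univ _) ?_).symm
      intro j _ hj
      rw [hsupp j hj, mul_zero]
    rw [h1, Pi.add_apply, hy1, hy2]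
    rw [← Finset.sum_inter_add_sum_sdiff ξstar ξ (fun j => X i j * βstar j)]
  -- y ∈ colSpan u, so Pu y = y
  have hymem : y ∈ colSpan X u := by
    rw [hysplit]
    apply Submodule.add_mem
    · have : y1 = ∑ j ∈ ξstar ∩ ξ, βstar j • (fun i => X i j) := by
        funext i; rw [hy1]; simp [Finset.sum_apply, mul_comm]
      rw [this]
      exact Submodule.sum_mem _ fun j hj => Submodule.smul_mem _ _
        (col_mem_colSpan X u (Finset.mem_union_left _ (Finset.mem_inter.1 hj).2))
    · have : y2 = ∑ j ∈ ξstar \ ξ, βstar j • (fun i => X i j) := by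
        funext i; rw [hy2]; simp [Finset.sum_apply, mul_comm]
      rw [this]
      exact Submodule.sum_mem _ fun j hj => Submodule.smul_mem _ _
        (col_mem_colSpan X u (Finset.mem_union_right _ (Finset.mem_sdiff.1 hj).1))
  have hPuy : Pu.mulVec y = y := hPu.2.2 y hymem
  -- y1 ∈ colSpan ξ, so Pξ y1 = y1
  have hy1mem : y1 ∈ colSpan X ξ := by
    have : y1 = ∑ j ∈ ξstar ∩ ξ, βstar j • (fun i => X i j) := by
      funext i; rw [hy1]; simp [Finset.sum_apply, mul_comm]
    rw [this]
    exact Submodule.sum_mem _ fun j hj => Submodule.smul_mem _ _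
      (col_mem_colSpan X ξ (Finset.mem_inter.1 hj).2)
  set v : Fin n → ℝ := fun i => ((Pu - Pξ).mulVec y) i with hv
  have hveq : v = y2 - Pξ.mulVec y2 := by
    funext i
    rw [hv]
    have : (Pu - Pξ).mulVec y = y - Pξ.mulVec y := by
      rw [Matrix.sub_mulVec, hPuy]
    rw [this]
    have hPy : Pξ.mulVec y = y1 + Pξ.mulVec y2 := by
      rw [hysplit, Matrix.mulVec_add, hPξ.2.2 y1 hy1mem]
    rw [hPy, hysplit]
    simp only [Pi.sub_apply, Pi.add_apply]
    ring
  -- coefficients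
  obtain ⟨a, ha⟩ : ∃ a, (cols X ξ).mulVec a = Pξ.mulVec y2 := by
    have := hPξ.2.1 y2
    rw [colSpan_eq_range] at this
    obtain ⟨a, ha⟩ := this
    exact ⟨a, ha⟩
  set Aext : Fin p → ℝ := fun j => if h : j ∈ ξ then a ⟨j, h⟩ else 0 with hAext
  set C : Fin p → ℝ := fun j => if j ∈ ξ then -Aext j else if j ∈ ξstar then βstar j else 0
    with hC
  set c : {j // j ∈ u} → ℝ := fun j => C j.val with hc
  have husplit : u = ξ ∪ (ξstar \ ξ) := by
    rw [hu, Finset.union_sdiff_self_eq_union]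
  have hdisj : Disjoint ξ (ξstar \ ξ) := Finset.disjoint_sdiff
  -- v = cols X u *ᵥ c
  have hveq2 : v = (cols X u).mulVec c := by
    funext i
    have h0 : (cols X u).mulVec c i = ∑ j : {j // j ∈ u}, X i j.val * C j.val := rfl
    have h1 : ∑ j : {j // j ∈ u}, X i j.val * C j.val = ∑ j ∈ u, X i j * C j :=
      Finset.sum_coe_sort u (fun j => X i j * C j)
    have h2 : ∑ j ∈ u, X i j * C j
        = ∑ j ∈ ξ, X i j * C j + ∑ j ∈ ξstar \ ξ, X i j * C j := by
      rw [husplit, Finset.sum_union hdisj]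
    have h3 : ∑ j ∈ ξ, X i j * C j = -((cols X ξ).mulVec a i) := by
      have hA : (cols X ξ).mulVec a i = ∑ j : {j // j ∈ ξ}, X i j.val * a j := rfl
      have hB : ∑ j : {j // j ∈ ξ}, X i j.val * a j = ∑ j ∈ ξ, X i j * Aext j := by
        rw [← Finset.sum_coe_sort ξ (fun j => X i j * Aext j)]
        refine Finset.sum_congr rfl fun j _ => ?_
        rw [hAext]
        simp only [dif_pos j.2]
      rw [hA, hB, ← Finset.sum_neg_distrib]
      refine Finset.sum_congr rfl fun j hj => ?_
      rw [hC]
      simp only [if_pos hj]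
      ring
    have h4 : ∑ j ∈ ξstar \ ξ, X i j * C j = y2 i := by
      rw [hy2]
      refine Finset.sum_congr rfl fun j hj => ?_
      obtain ⟨hj1, hj2⟩ := Finset.mem_sdiff.1 hj
      rw [hC]
      simp only [if_neg hj2, if_pos hj1]
    rw [hveq]
    simp only [Pi.sub_apply]
    rw [h0, h1, h2, h3, h4, ← ha]
    ring
  -- norm of v as quadratic form
  have hnorm : ∑ i, v i ^ 2 = c ⬝ᵥ (gram X u).mulVec c := by
    have h1 : ∑ i, v i ^ 2 = v ⬝ᵥ v := by
      simp [dotProduct, sq]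
    rw [h1, hveq2, _root_.gram, ← Matrix.mulVec_mulVec, Matrix.dotProduct_mulVec c,
      Matrix.vecMul_transpose]
  have hne : u.Nonempty := Finset.Nonempty.mono (Finset.subset_union_right) hξstar_ne
  haveI : Nonempty {j // j ∈ u} := Finset.nonempty_coe_sort.2 hne
  have hherm : (gram X u).IsHermitian := by
    rw [_root_.gram]
    simpa using Matrix.isHermitian_conjTranspose_mul_self (cols X u)
  have hquad := lamMin_quad (gram X u) hherm c
  -- ∑ c² ≥ ∑ β² over sdiff
  have hcsum : ∑ j ∈ ξstar \ ξ, (βstar j) ^ 2 ≤ ∑ j : {j // j ∈ u}, c j ^ 2 := by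
    have h1 : ∑ j : {j // j ∈ u}, c j ^ 2 = ∑ j ∈ u, C j ^ 2 :=
      Finset.sum_coe_sort u (fun j => C j ^ 2)
    rw [h1]
    have hsub : ξstar \ ξ ⊆ u := by
      rw [husplit]; exact Finset.subset_union_right
    refine le_trans (le_of_eq ?_) (Finset.sum_le_sum_of_subset_of_nonneg hsub
      (fun _ _ _ => sq_nonneg _))
    refine Finset.sum_congr rfl fun j hj => ?_
    obtain ⟨hj1, hj2⟩ := Finset.mem_sdiff.1 hj
    rw [hC]
    simp only [if_neg hj2, if_pos hj1]
  -- combine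
  have hnl : (0:ℝ) ≤ (n : ℝ) * lam := by positivity
  have hlm : (0:ℝ) ≤ lamMin (gram X u) := le_trans hnl heig
  calc (n : ℝ) * lam * ∑ j ∈ ξstar \ ξ, (βstar j) ^ 2
      ≤ lamMin (gram X u) * ∑ j : {j // j ∈ u}, c j ^ 2 := by
        refine mul_le_mul heig hcsum ?_ hlm
        exact Finset.sum_nonneg fun j _ => sq_nonneg _
    _ ≤ c ⬝ᵥ (gram X u).mulVec c := hquad
    _ = ∑ i, v i ^ 2 := hnorm.symm
    _ = ∑ i, ((Pu - Pξ).mulVec (X.mulVec βstar) i) ^ 2 := rfl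

lemma signal_separation_part2 {n p : ℕ} (ξstar ξ : Finset (Fin p)) (βstar : Fin p → ℝ)
    (lam : ℝ) (hξstar_ne : ξstar.Nonempty) (hlam : 0 < lam) :
    (n : ℝ) * lam * ((ξstar \ ξ).card : ℝ) * (⨅ j : {j // j ∈ ξstar}, |βstar j.val|) ^ 2 ≤
        (n : ℝ) * lam * ∑ j ∈ ξstar \ ξ, (βstar j) ^ 2 := by
  haveI : Nonempty {j // j ∈ ξstar} := Finset.nonempty_coe_sort.2 hξstar_ne
  set m := ⨅ j : {j // j ∈ ξstar}, |βstar j.val| with hm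
  have hm0 : 0 ≤ m := Real.iInf_nonneg fun j => abs_nonneg _
  have hkey : ((ξstar \ ξ).card : ℝ) * m ^ 2 ≤ ∑ j ∈ ξstar \ ξ, (βstar j) ^ 2 := by
    calc ((ξstar \ ξ).card : ℝ) * m ^ 2 = ∑ _j ∈ ξstar \ ξ, m ^ 2 := by
          rw [Finset.sum_const, nsmul_eq_mul]
      _ ≤ ∑ j ∈ ξstar \ ξ, (βstar j) ^ 2 := by
          refine Finset.sum_le_sum fun j hj => ?_
          have hj1 : j ∈ ξstar := (Finset.mem_sdiff.1 hj).1
          have hle : m ≤ |βstar j| :=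
            ciInf_le (Set.Finite.bddBelow (Set.finite_range _)) (⟨j, hj1⟩ : {j // j ∈ ξstar})
          calc m ^ 2 ≤ |βstar j| ^ 2 := pow_le_pow_left₀ hm0 hle 2
            _ = (βstar j) ^ 2 := sq_abs _
  have hnl : (0:ℝ) ≤ (n:ℝ) * lam := mul_nonneg (Nat.cast_nonneg n) hlam.le
  calc (n:ℝ) * lam * ((ξstar \ ξ).card : ℝ) * m ^ 2
      = (n:ℝ) * lam * (((ξstar \ ξ).card : ℝ) * m ^ 2) := by ring
    _ ≤ (n:ℝ) * lam * ∑ j ∈ ξstar \ ξ, (βstar j) ^ 2 :=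
        mul_le_mul_of_nonneg_left hkey hnl

/-- Signal separation via the Schur complement:
`‖(P_{ξ∪ξ⋆} − P_ξ)X_{ξ⋆}β⋆_{ξ⋆}‖² ≥ nλ‖β⋆_{ξ⋆∖ξ}‖² ≥ nλ·|ξ⋆∖ξ|·min_{j∈ξ⋆}|β⋆_j|²`. -/
theorem signal_separation {n p : ℕ} (X : Matrix (Fin n) (Fin p) ℝ)
    (ξstar ξ : Finset (Fin p)) (βstar : Fin p → ℝ) (lam : ℝ)
    (hξstar_ne : ξstar.Nonempty)
    (hsupp : ∀ j ∉ ξstar, βstar j = 0)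
    (hnotsub : ¬ ξstar ⊆ ξ)
    (hfull : (cols X ξ).rank = ξ.card)
    (hlam : 0 < lam)
    (heig : (n : ℝ) * lam ≤ lamMin (gram X (ξ ∪ ξstar)))
    (Pu Pξ : Matrix (Fin n) (Fin n) ℝ)
    (hPu : IsProjOnto X (ξ ∪ ξstar) Pu) (hPξ : IsProjOnto X ξ Pξ) :
    (n : ℝ) * lam * ∑ j ∈ ξstar \ ξ, (βstar j) ^ 2 ≤
        ∑ i, ((Pu - Pξ).mulVec (X.mulVec βstar) i) ^ 2 ∧
    (n : ℝ) * lam * ((ξstar \ ξ).card : ℝ) * (⨅ j : {j // j ∈ ξstar}, |βstar j.val|) ^ 2 ≤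
        (n : ℝ) * lam * ∑ j ∈ ξstar \ ξ, (βstar j) ^ 2 :=
  ⟨signal_separation_part1 X ξstar ξ βstar lam hξstar_ne hsupp hlam heig Pu Pξ hPu hPξ,
    signal_separation_part2 ξstar ξ βstar lam hξstar_ne hlam⟩
end
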